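/- Let G and H be finite graphs that are not 3-colorable, let e be a critical edge of G and f a critical edge of H, let N be a gadget, and let W = (G,e) ⊕ (H,f) be the glued graph. Then for every type A, every minor-closed family of operations on A that satisfies Σ_G also satisfies Σ_W, and every minor-closed family of operations on A that satisfies Σ_H also satisfies Σ_W. -/

import Mathlib

/-- A gadget: a finite graph `N` with four distinguished pairwise distinct vertices
`x, x', y, y'` (with `(x,x')` and `(y,y')` non-edges) and a distinguished edge
`(d₁, d₂)`, satisfying the three extension properties with respect to 3-colorings. -/
structure Gadget {VN : Type*} (N : SimpleGraph VN) where
  x : VN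
  x' : VN
  y : VN
  y' : VN
  d₁ : VN
  d₂ : VN
  hxx' : x ≠ x'
  hxy : x ≠ y
  hxy' : x ≠ y'
  hx'y : x' ≠ y
  hx'y' : x' ≠ y'
  hyy' : y ≠ y'
  nonedge_x : ¬ N.Adj x x'
  nonedge_y : ¬ N.Adj y y'
  hd : N.Adj d₁ d₂
  prop_i : ∀ c : N →g (⊤ : SimpleGraph (Fin 3)), Xor' (c x ≠ c x') (c y ≠ c y')
  prop_ii : ∀ c : VN → Fin 3, Xor' (c x ≠ c x') (c y ≠ c y') →
    ∃ c' : N →g (⊤ : SimpleGraph (Fin 3)),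
      c' x = c x ∧ c' x' = c x' ∧ c' y = c y ∧ c' y' = c y'
  prop_iii : ∀ c : VN → Fin 3, c x = c x' → c y = c y' →
    ∃ c' : N.deleteEdges {s(d₁, d₂)} →g (⊤ : SimpleGraph (Fin 3)),
      c' x = c x ∧ c' x' = c x' ∧ c' y = c y ∧ c' y' = c y'

/-- The vertex set of the glued graph `(G,e) ⊕ (H,f)`: the vertices of `G`, the
vertices of `H`, and the vertices of `N` other than `x, x', y, y'` (which are
identified with the endpoints of `e` and `f`). -/
def GlueV (VG VH : Type*) {VN : Type*} {N : SimpleGraph VN} (gd : Gadget N) : Type _ :=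
  VG ⊕ (VH ⊕ {m : VN // m ≠ gd.x ∧ m ≠ gd.x' ∧ m ≠ gd.y ∧ m ≠ gd.y'})

/-- The canonical map from the vertices of `N` into the glued graph, identifying
`x` with `x₀`, `x'` with `x₀'`, `y` with `y₀` and `y'` with `y₀'`. -/
def glueMap {VG VH VN : Type*} [DecidableEq VN] {N : SimpleGraph VN} (gd : Gadget N)
    (x₀ x₀' : VG) (y₀ y₀' : VH) (m : VN) : GlueV VG VH gd :=
  if h1 : m = gd.x then Sum.inl x₀
  else if h2 : m = gd.x' then Sum.inl x₀'
  else if h3 : m = gd.y then Sum.inr (Sum.inl y₀)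
  else if h4 : m = gd.y' then Sum.inr (Sum.inl y₀')
  else Sum.inr (Sum.inr ⟨m, h1, h2, h3, h4⟩)

/-- The glued graph `W = (G, e) ⊕ (H, f)` where `e = (x₀, x₀')` and `f = (y₀, y₀')`:
its edges are those of `G − e`, those of `H − f`, and those of `N` (transported
along `glueMap`). -/
def glued {VG VH VN : Type*} [DecidableEq VN] (G : SimpleGraph VG) (H : SimpleGraph VH)
    {N : SimpleGraph VN} (gd : Gadget N) (x₀ x₀' : VG) (y₀ y₀' : VH) :
    SimpleGraph (GlueV VG VH gd) :=
  SimpleGraph.fromRel (fun a b =>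
    (∃ u v : VG, a = Sum.inl u ∧ b = Sum.inl v ∧ (G.deleteEdges {s(x₀, x₀')}).Adj u v) ∨
    (∃ u v : VH, a = Sum.inr (Sum.inl u) ∧ b = Sum.inr (Sum.inl v) ∧
      (H.deleteEdges {s(y₀, y₀')}).Adj u v) ∨
    (∃ u v : VN, a = glueMap gd x₀ x₀' y₀ y₀' u ∧ b = glueMap gd x₀ x₀' y₀ y₀' v ∧
      N.Adj u v))

/-- `M` is a minor-closed family of operations on `A`. -/
def MinorClosed {A : Type*} (M : (n : ℕ) → Set ((Fin n → A) → A)) : Prop :=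
  ∀ (n m : ℕ) (f : (Fin n → A) → A), f ∈ M n → ∀ σ : Fin n → Fin m,
    (fun x : Fin m → A => f (x ∘ σ)) ∈ M m

/-- The family `M` satisfies the condition `Σ_G`. -/
def SatSigma {V A : Type*} (G : SimpleGraph V)
    (M : (n : ℕ) → Set ((Fin n → A) → A)) : Prop :=
  ∃ (f : V → (Fin 3 → A) → A) (g : V → V → (Fin 6 → A) → A),
    (∀ v, f v ∈ M 3) ∧ (∀ u v, G.Adj u v → g u v ∈ M 6) ∧
    ∀ u v, G.Adj u v → ∀ x y z : A,
      f u ![x, y, z] = g u v ![x, y, x, z, y, z] ∧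
      f v ![x, y, z] = g u v ![y, x, z, x, z, y]


namespace Stmt11Aux

def pFst : Fin 6 → Fin 3 := ![0,1,0,2,1,2]
def pSnd : Fin 6 → Fin 3 := ![1,0,2,0,2,1]
def enc : Fin 3 → Fin 3 → Fin 6 := fun i j => ![![0,0,2],![1,1,4],![3,5,5]] i j
def other : Fin 3 → Fin 3 → Fin 3 := fun i j => -(i+j)

lemma pFst_ne_pSnd : ∀ k, pFst k ≠ pSnd k := by decide
lemma pFst_enc : ∀ i j, i ≠ j → pFst (enc i j) = i := by decide
lemma pSnd_enc : ∀ i j, i ≠ j → pSnd (enc i j) = j := by decide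
lemma other_ne_left : ∀ i j, i ≠ j → other i j ≠ i := by decide
lemma other_ne_right : ∀ i j, i ≠ j → other i j ≠ j := by decide

lemma pat1 {A : Type*} (x y z : A) (m : Fin 6) :
    (![x,y,x,z,y,z]) m = (![x,y,z]) (pFst m) := by fin_cases m <;> rfl
lemma pat2 {A : Type*} (x y z : A) (m : Fin 6) :
    (![y,x,z,x,z,y]) m = (![x,y,z]) (pSnd m) := by fin_cases m <;> rfl

def Compat {VG : Type*} (G : SimpleGraph VG) (x₀ x₀' : VG) :
    VG ⊕ (Fin 6 → Fin 3) → VG ⊕ (Fin 6 → Fin 3) → Prop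
  | .inl a, .inl b => G.Adj a b
  | .inl a, .inr t => (a = x₀ ∧ ∀ k, pFst k ≠ t k) ∨ (a = x₀' ∧ ∀ k, pSnd k ≠ t k)
  | .inr t, .inl b => (b = x₀ ∧ ∀ k, t k ≠ pFst k) ∨ (b = x₀' ∧ ∀ k, t k ≠ pSnd k)
  | .inr t, .inr t' => ∀ k, t k ≠ t' k

lemma compat_symm {VG : Type*} {G : SimpleGraph VG} {x₀ x₀' : VG}
    {s t : VG ⊕ (Fin 6 → Fin 3)} (h : Compat G x₀ x₀' s t) : Compat G x₀ x₀' t s := by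
  cases s <;> cases t <;> simp only [Compat] at h ⊢
  · exact h.symm
  · rcases h with ⟨h1, h2⟩ | ⟨h1, h2⟩
    · exact Or.inl ⟨h1, fun k => (h2 k).symm⟩
    · exact Or.inr ⟨h1, fun k => (h2 k).symm⟩
  · rcases h with ⟨h1, h2⟩ | ⟨h1, h2⟩
    · exact Or.inl ⟨h1, fun k => (h2 k).symm⟩
    · exact Or.inr ⟨h1, fun k => (h2 k).symm⟩
  · exact fun k => (h k).symm

lemma sigma_transfer {VG VW A : Type*} (G : SimpleGraph VG) (x₀ x₀' : VG)
    (he : G.Adj x₀ x₀')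
    (W : SimpleGraph VW) (M : (n : ℕ) → Set ((Fin n → A) → A)) (hM : MinorClosed M)
    (hSG : SatSigma G M) (π : VW → VG ⊕ (Fin 6 → Fin 3))
    (hπ : ∀ u v, W.Adj u v → Compat G x₀ x₀' (π u) (π v)) :
    SatSigma W M := by
  classical
  obtain ⟨f, g, hf, hg, hfg⟩ := hSG
  have hg₀M : g x₀ x₀' ∈ M 6 := hg x₀ x₀' he
  set T : VG ⊕ (Fin 6 → Fin 3) → Fin 6 → Fin 3 :=
    Sum.elim (fun a => if a = x₀ then pFst else pSnd) id with hT
  have hTx : T (Sum.inl x₀) = pFst := by simp [hT]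
  have hTx' : T (Sum.inl x₀') = pSnd := by simp [hT, he.ne']
  have hTt : ∀ t, T (Sum.inr t) = t := fun t => rfl
  refine ⟨fun w => Sum.elim f (fun t => fun x => g x₀ x₀' (x ∘ t)) (π w),
    fun u v => Sum.elim
      (fun a => Sum.elim (fun b => g a b)
        (fun _ => fun x => g x₀ x₀' (x ∘ fun k => enc (T (π u) k) (T (π v) k))) (π v))
      (fun _ => fun x => g x₀ x₀' (x ∘ fun k => enc (T (π u) k) (T (π v) k)))
      (π u), ?_, ?_, ?_⟩
  · intro w
    dsimp only
    rcases hw : π w with a | t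
    · exact hf a
    · exact hM 6 3 _ hg₀M t
  · intro u v huv
    dsimp only
    rcases hu : π u with a | t <;> rcases hv : π v with b | t' <;>
      simp only [Sum.elim_inl, Sum.elim_inr]
    · have hc := hπ u v huv; rw [hu, hv] at hc; exact hg a b hc
    · exact hM 6 6 _ hg₀M _
    · exact hM 6 6 _ hg₀M _
    · exact hM 6 6 _ hg₀M _
  · intro u v huv x y z
    have hc := hπ u v huv
    -- key identities
    have key1 : ∀ (t t' : Fin 6 → Fin 3), (∀ k, t k ≠ t' k) →
        (![x,y,x,z,y,z] ∘ fun k => enc (t k) (t' k)) = (![x,y,z] ∘ t) := by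
      intro t t' hne; funext k
      simp only [Function.comp]
      rw [pat1, pFst_enc _ _ (hne k)]
    have key2 : ∀ (t t' : Fin 6 → Fin 3), (∀ k, t k ≠ t' k) →
        (![y,x,z,x,z,y] ∘ fun k => enc (t k) (t' k)) = (![x,y,z] ∘ t') := by
      intro t t' hne; funext k
      simp only [Function.comp]
      rw [pat2, pSnd_enc _ _ (hne k)]
    have hpat1 : (![x,y,x,z,y,z] : Fin 6 → A) = (![x,y,z] ∘ pFst) := by
      funext m; exact pat1 x y z m
    have hpat2 : (![y,x,z,x,z,y] : Fin 6 → A) = (![x,y,z] ∘ pSnd) := by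
      funext m; exact pat2 x y z m
    have hfx : f x₀ ![x,y,z] = g x₀ x₀' (![x,y,z] ∘ pFst) := by
      rw [← hpat1]; exact (hfg x₀ x₀' he x y z).1
    have hfx' : f x₀' ![x,y,z] = g x₀ x₀' (![x,y,z] ∘ pSnd) := by
      rw [← hpat2]; exact (hfg x₀ x₀' he x y z).2
    dsimp only
    rcases hu : π u with a | t <;> rcases hv : π v with b | t' <;>
      rw [hu, hv] at hc <;> simp only [Sum.elim_inl, Sum.elim_inr]
    · exact hfg a b hc x y z
    · -- inl a, inr t'
      simp only [Compat] at hc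
      rw [hTt]
      rcases hc with ⟨rfl, hne⟩ | ⟨rfl, hne⟩
      · rw [hTx]
        constructor
        · rw [key1 _ _ hne]; exact hfx
        · rw [key2 _ _ hne]
      · rw [hTx']
        constructor
        · rw [key1 _ _ hne]; exact hfx'
        · rw [key2 _ _ hne]
    · -- inr t, inl b
      simp only [Compat] at hc
      rw [hTt]
      rcases hc with ⟨rfl, hne⟩ | ⟨rfl, hne⟩
      · rw [hTx]
        constructor
        · rw [key1 _ _ hne]
        · rw [key2 _ _ hne]; exact hfx
      · rw [hTx']
        constructor
        · rw [key1 _ _ hne]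
        · rw [key2 _ _ hne]; exact hfx'
    · -- inr, inr
      simp only [Compat] at hc
      rw [hTt, hTt, key1 _ _ hc, key2 _ _ hc]
      exact ⟨rfl, rfl⟩

end Stmt11Aux
lemma forced_eq {V : Type*} (H : SimpleGraph V) (hH : ¬ H.Colorable 3) (y₀ y₀' : V)
    (c : (H.deleteEdges {s(y₀, y₀')}).Coloring (Fin 3)) : c y₀ = c y₀' := by
  by_contra hne
  apply hH
  refine ⟨SimpleGraph.Coloring.mk c ?_⟩
  intro a b hab
  by_cases hs : s(a, b) = s(y₀, y₀')
  · rcases Sym2.eq_iff.1 hs with ⟨rfl, rfl⟩ | ⟨rfl, rfl⟩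
    · exact hne
    · exact fun h => hne h.symm
  · exact c.valid (SimpleGraph.deleteEdges_adj.2 ⟨hab, by simp [hs]⟩)


open Stmt11Aux in
theorem stmt11 {VG VH VN : Type*} [Fintype VG] [Fintype VH] [Fintype VN] [DecidableEq VN]
    (G : SimpleGraph VG) (H : SimpleGraph VH) (N : SimpleGraph VN) (gd : Gadget N)
    (hG : ¬ G.Colorable 3) (hH : ¬ H.Colorable 3)
    (x₀ x₀' : VG) (he : G.Adj x₀ x₀')
    (hecrit : (G.deleteEdges {s(x₀, x₀')}).Colorable 3)
    (y₀ y₀' : VH) (hf : H.Adj y₀ y₀')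
    (hfcrit : (H.deleteEdges {s(y₀, y₀')}).Colorable 3)
    (A : Type*) (M : (n : ℕ) → Set ((Fin n → A) → A)) (hM : MinorClosed M) :
    (SatSigma G M → SatSigma (glued G H gd x₀ x₀' y₀ y₀') M) ∧
    (SatSigma H M → SatSigma (glued G H gd x₀ x₀' y₀ y₀') M) := by
  classical
  constructor
  · -- Part 1 : from Σ_G
    intro hSG
    obtain ⟨cH⟩ := hfcrit
    have cHeq : cH y₀ = cH y₀' := forced_eq H hH y₀ y₀' cH
    set vv : Fin 6 → Fin 3 := fun k => other (pFst k) (pSnd k) with hvv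
    set ck : Fin 6 → VN → Fin 3 :=
      fun k m => if m = gd.x then pFst k else if m = gd.x' then pSnd k else vv k with hck
    have hckx : ∀ k, ck k gd.x = pFst k := fun k => by simp [hck]
    have hckx' : ∀ k, ck k gd.x' = pSnd k := fun k => by
      simp [hck, if_neg (Ne.symm gd.hxx')]
    have hcky : ∀ k, ck k gd.y = vv k := fun k => by
      simp [hck, if_neg (Ne.symm gd.hxy), if_neg (Ne.symm gd.hx'y)]
    have hcky' : ∀ k, ck k gd.y' = vv k := fun k => by
      simp [hck, if_neg (Ne.symm gd.hxy'), if_neg (Ne.symm gd.hx'y')]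
    have hxor : ∀ k, Xor' (ck k gd.x ≠ ck k gd.x') (ck k gd.y ≠ ck k gd.y') := by
      intro k
      refine Or.inl ⟨?_, ?_⟩
      · rw [hckx, hckx']; exact pFst_ne_pSnd k
      · rw [hcky, hcky']; exact fun h => h rfl
    choose cN hN1 hN2 hN3 hN4 using fun k => gd.prop_ii (ck k) (hxor k)
    set π : GlueV VG VH gd → VG ⊕ (Fin 6 → Fin 3) :=
      Sum.elim Sum.inl
        (Sum.elim (fun h => Sum.inr fun k => Equiv.swap (cH y₀) (vv k) (cH h))
          (fun m => Sum.inr fun k => cN k m.1)) with hπdef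
    have hπG : ∀ a : VG, π (Sum.inl a) = Sum.inl a := fun a => rfl
    have hπH : ∀ h : VH,
        π (Sum.inr (Sum.inl h)) = Sum.inr fun k => Equiv.swap (cH y₀) (vv k) (cH h) :=
      fun h => rfl
    have hΛ : ∀ m : VN, π (glueMap gd x₀ x₀' y₀ y₀' m) =
        if m = gd.x then Sum.inl x₀ else if m = gd.x' then Sum.inl x₀'
        else Sum.inr fun k => cN k m := by
      intro m
      by_cases h1 : m = gd.x
      · subst h1; simp [glueMap, hπdef]
      · by_cases h2 : m = gd.x'
        · subst h2; simp [glueMap, hπdef, if_neg (Ne.symm gd.hxx'), h1]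
        · by_cases h3 : m = gd.y
          · subst h3
            rw [if_neg h1, if_neg h2]
            have : glueMap gd x₀ x₀' y₀ y₀' gd.y = Sum.inr (Sum.inl y₀) := by
              simp [glueMap, h1, h2]; rfl
            rw [this, hπH]
            congr 1
            funext k
            rw [Equiv.swap_apply_left, hN3 k, hcky k]
          · by_cases h4 : m = gd.y'
            · subst h4
              rw [if_neg h1, if_neg h2]
              have : glueMap gd x₀ x₀' y₀ y₀' gd.y' = Sum.inr (Sum.inl y₀') := by
                simp [glueMap, h1, h2, if_neg (Ne.symm gd.hyy')]; exact dif_neg (Ne.symm gd.hyy')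
              rw [this, hπH]
              congr 1
              funext k
              rw [← cHeq, Equiv.swap_apply_left, hN4 k, hcky' k]
            · rw [if_neg h1, if_neg h2]
              have : glueMap gd x₀ x₀' y₀ y₀' m = Sum.inr (Sum.inr ⟨m, h1, h2, h3, h4⟩) := by
                simp [glueMap, h1, h2, h3, h4]; rfl
              rw [this]
              rfl
    refine sigma_transfer G x₀ x₀' he _ M hM hSG π ?_
    intro u v huv
    simp only [glued, SimpleGraph.fromRel_adj] at huv
    have main : ∀ a b : GlueV VG VH gd,
        ((∃ u' v' : VG, a = Sum.inl u' ∧ b = Sum.inl v' ∧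
            (G.deleteEdges {s(x₀, x₀')}).Adj u' v') ∨
         (∃ u' v' : VH, a = Sum.inr (Sum.inl u') ∧ b = Sum.inr (Sum.inl v') ∧
            (H.deleteEdges {s(y₀, y₀')}).Adj u' v') ∨
         (∃ m m' : VN, a = glueMap gd x₀ x₀' y₀ y₀' m ∧ b = glueMap gd x₀ x₀' y₀ y₀' m' ∧
            N.Adj m m')) → Compat G x₀ x₀' (π a) (π b) := by
      rintro a b (⟨u', v', rfl, rfl, hadj⟩ | ⟨u', v', rfl, rfl, hadj⟩ | ⟨m, m', rfl, rfl, hadj⟩)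
      · rw [hπG, hπG]
        exact (SimpleGraph.deleteEdges_adj.1 hadj).1
      · rw [hπH, hπH]
        intro k
        exact (Equiv.swap (cH y₀) (vv k)).injective.ne (cH.valid hadj)
      · rw [hΛ m, hΛ m']
        have hcne : ∀ k, cN k m ≠ cN k m' := fun k => by
          have := (cN k).map_rel' hadj
          simpa using this
        by_cases h1 : m = gd.x
        · subst h1
          rw [if_pos rfl]
          by_cases h1' : m' = gd.x
          · subst h1'; exact absurd hadj (N.loopless.irrefl _)
          · by_cases h2' : m' = gd.x'
            · subst h2'; exact absurd hadj gd.nonedge_x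
            · rw [if_neg h1', if_neg h2']
              refine Or.inl ⟨rfl, fun k => ?_⟩
              rw [← hckx k, ← hN1 k]
              exact hcne k
        · by_cases h2 : m = gd.x'
          · subst h2
            rw [if_neg h1, if_pos rfl]
            by_cases h1' : m' = gd.x
            · subst h1'; exact absurd hadj.symm gd.nonedge_x
            · by_cases h2' : m' = gd.x'
              · subst h2'; exact absurd hadj (N.loopless.irrefl _)
              · rw [if_neg h1', if_neg h2']
                refine Or.inr ⟨rfl, fun k => ?_⟩
                rw [← hckx' k, ← hN2 k]
                exact hcne k
          · rw [if_neg h1, if_neg h2]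
            by_cases h1' : m' = gd.x
            · subst h1'
              rw [if_pos rfl]
              refine Or.inl ⟨rfl, fun k => ?_⟩
              rw [← hckx k, ← hN1 k]
              exact (hcne k)
            · by_cases h2' : m' = gd.x'
              · subst h2'
                rw [if_neg h1', if_pos rfl]
                refine Or.inr ⟨rfl, fun k => ?_⟩
                rw [← hckx' k, ← hN2 k]
                exact hcne k
              · rw [if_neg h1', if_neg h2']
                exact fun k => hcne k
    rcases huv.2 with h | h
    · exact main u v h
    · exact compat_symm (main v u h)
  · -- Part 2 : from Σ_H
    intro hSH
    obtain ⟨cG⟩ := hecrit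
    have cGeq : cG x₀ = cG x₀' := forced_eq G hG x₀ x₀' cG
    set vv : Fin 6 → Fin 3 := fun k => other (pFst k) (pSnd k) with hvv
    set ck : Fin 6 → VN → Fin 3 :=
      fun k m => if m = gd.y then pFst k else if m = gd.y' then pSnd k else vv k with hck
    have hcky : ∀ k, ck k gd.y = pFst k := fun k => by simp [hck]
    have hcky' : ∀ k, ck k gd.y' = pSnd k := fun k => by
      simp [hck, if_neg (Ne.symm gd.hyy')]
    have hckx : ∀ k, ck k gd.x = vv k := fun k => by
      simp [hck, if_neg gd.hxy, if_neg gd.hxy']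
    have hckx' : ∀ k, ck k gd.x' = vv k := fun k => by
      simp [hck, if_neg gd.hx'y, if_neg gd.hx'y']
    have hxor : ∀ k, Xor' (ck k gd.x ≠ ck k gd.x') (ck k gd.y ≠ ck k gd.y') := by
      intro k
      refine Or.inr ⟨?_, ?_⟩
      · rw [hcky, hcky']; exact pFst_ne_pSnd k
      · rw [hckx, hckx']; exact fun h => h rfl
    choose cN hN1 hN2 hN3 hN4 using fun k => gd.prop_ii (ck k) (hxor k)
    set π : GlueV VG VH gd → VH ⊕ (Fin 6 → Fin 3) :=
      Sum.elim (fun a => Sum.inr fun k => Equiv.swap (cG x₀) (vv k) (cG a))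
        (Sum.elim Sum.inl (fun m => Sum.inr fun k => cN k m.1)) with hπdef
    have hπH : ∀ h : VH, π (Sum.inr (Sum.inl h)) = Sum.inl h := fun h => rfl
    have hπG : ∀ a : VG,
        π (Sum.inl a) = Sum.inr fun k => Equiv.swap (cG x₀) (vv k) (cG a) :=
      fun a => rfl
    have hΛ : ∀ m : VN, π (glueMap gd x₀ x₀' y₀ y₀' m) =
        if m = gd.y then Sum.inl y₀ else if m = gd.y' then Sum.inl y₀'
        else Sum.inr fun k => cN k m := by
      intro m
      by_cases h1 : m = gd.x
      · subst h1
        rw [if_neg gd.hxy, if_neg gd.hxy']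
        have : glueMap gd x₀ x₀' y₀ y₀' gd.x = Sum.inl x₀ := by simp [glueMap]; rfl
        rw [this, hπG]
        congr 1
        funext k
        rw [Equiv.swap_apply_left, hN1 k, hckx k]
      · by_cases h2 : m = gd.x'
        · subst h2
          rw [if_neg gd.hx'y, if_neg gd.hx'y']
          have : glueMap gd x₀ x₀' y₀ y₀' gd.x' = Sum.inl x₀' := by
            simp [glueMap, if_neg (Ne.symm gd.hxx')]; exact dif_neg (Ne.symm gd.hxx')
          rw [this, hπG]
          congr 1
          funext k
          rw [← cGeq, Equiv.swap_apply_left, hN2 k, hckx' k]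
        · by_cases h3 : m = gd.y
          · subst h3
            rw [if_pos rfl]
            have : glueMap gd x₀ x₀' y₀ y₀' gd.y = Sum.inr (Sum.inl y₀) := by
              simp [glueMap, h1, h2]; rfl
            rw [this, hπH]
          · by_cases h4 : m = gd.y'
            · subst h4
              rw [if_neg h3, if_pos rfl]
              have : glueMap gd x₀ x₀' y₀ y₀' gd.y' = Sum.inr (Sum.inl y₀') := by
                simp [glueMap, h1, h2, if_neg (Ne.symm gd.hyy')]; exact dif_neg (Ne.symm gd.hyy')
              rw [this, hπH]
            · rw [if_neg h3, if_neg h4]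
              have : glueMap gd x₀ x₀' y₀ y₀' m = Sum.inr (Sum.inr ⟨m, h1, h2, h3, h4⟩) := by
                simp [glueMap, h1, h2, h3, h4]; rfl
              rw [this]
              rfl
    refine sigma_transfer H y₀ y₀' hf _ M hM hSH π ?_
    intro u v huv
    simp only [glued, SimpleGraph.fromRel_adj] at huv
    have main : ∀ a b : GlueV VG VH gd,
        ((∃ u' v' : VG, a = Sum.inl u' ∧ b = Sum.inl v' ∧
            (G.deleteEdges {s(x₀, x₀')}).Adj u' v') ∨
         (∃ u' v' : VH, a = Sum.inr (Sum.inl u') ∧ b = Sum.inr (Sum.inl v') ∧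
            (H.deleteEdges {s(y₀, y₀')}).Adj u' v') ∨
         (∃ m m' : VN, a = glueMap gd x₀ x₀' y₀ y₀' m ∧ b = glueMap gd x₀ x₀' y₀ y₀' m' ∧
            N.Adj m m')) → Compat H y₀ y₀' (π a) (π b) := by
      rintro a b (⟨u', v', rfl, rfl, hadj⟩ | ⟨u', v', rfl, rfl, hadj⟩ | ⟨m, m', rfl, rfl, hadj⟩)
      · rw [hπG, hπG]
        intro k
        exact (Equiv.swap (cG x₀) (vv k)).injective.ne (cG.valid hadj)
      · rw [hπH, hπH]
        exact (SimpleGraph.deleteEdges_adj.1 hadj).1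
      · rw [hΛ m, hΛ m']
        have hcne : ∀ k, cN k m ≠ cN k m' := fun k => by
          have := (cN k).map_rel' hadj
          simpa using this
        by_cases h1 : m = gd.y
        · subst h1
          rw [if_pos rfl]
          by_cases h1' : m' = gd.y
          · subst h1'; exact absurd hadj (N.loopless.irrefl _)
          · by_cases h2' : m' = gd.y'
            · subst h2'; exact absurd hadj gd.nonedge_y
            · rw [if_neg h1', if_neg h2']
              refine Or.inl ⟨rfl, fun k => ?_⟩
              rw [← hcky k, ← hN3 k]
              exact hcne k
        · by_cases h2 : m = gd.y'
          · subst h2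
            rw [if_neg h1, if_pos rfl]
            by_cases h1' : m' = gd.y
            · subst h1'; exact absurd hadj.symm gd.nonedge_y
            · by_cases h2' : m' = gd.y'
              · subst h2'; exact absurd hadj (N.loopless.irrefl _)
              · rw [if_neg h1', if_neg h2']
                refine Or.inr ⟨rfl, fun k => ?_⟩
                rw [← hcky' k, ← hN4 k]
                exact hcne k
          · rw [if_neg h1, if_neg h2]
            by_cases h1' : m' = gd.y
            · subst h1'
              rw [if_pos rfl]
              refine Or.inl ⟨rfl, fun k => ?_⟩
              rw [← hcky k, ← hN3 k]
              exact hcne k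
            · by_cases h2' : m' = gd.y'
              · subst h2'
                rw [if_neg h1', if_pos rfl]
                refine Or.inr ⟨rfl, fun k => ?_⟩
                rw [← hcky' k, ← hN4 k]
                exact hcne k
              · rw [if_neg h1', if_neg h2']
                exact fun k => hcne k
    rcases huv.2 with h | h
    · exact main u v h
    · exact compat_symm (main v u h)
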